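/- arXiv:2312.04368 — 2 statements merged into one kernel-verified Lean document; each statement's English description precedes it below -/
import Mathlib

section
/- Let q be a triangle with vertices Q_i, Q_j, Q_k such that every interior angle of q is at least θ_s. If U is a point in the interior of q, then the smallest of the three visibility angles θ_ij, θ_ik, θ_jk at U satisfies θ_s ≤ θ_min ≤ 120°, where θ_min denotes the minimum of the three; consequently, the visibility angle θ_E closest to 90° satisfies |90° − θ_E| ≤ 90° − θ_s, assuming 0° ≤ θ_s ≤ 60°. -/
open EuclideanGeometry Real

private lemma angle_left_smul {p q r s : EuclideanSpace ℝ (Fin 2)} {t : ℝ} (ht : 0 < t)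
    (h : s - p = t • (q - p)) : ∠ s p r = ∠ q p r := by
  unfold EuclideanGeometry.angle
  simp only [vsub_eq_sub]
  rw [h, InnerProductGeometry.angle_smul_left_of_pos _ _ ht]

private lemma angle_right_smul {p q r s : EuclideanSpace ℝ (Fin 2)} {t : ℝ} (ht : 0 < t)
    (h : s - p = t • (q - p)) : ∠ r p s = ∠ r p q := by
  unfold EuclideanGeometry.angle
  simp only [vsub_eq_sub]
  rw [h, InnerProductGeometry.angle_smul_right_of_pos _ _ ht]

private lemma ne_of_coeff₁ {A B C X Y : EuclideanSpace ℝ (Fin 2)}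
    (hind : ∀ x y : ℝ, x • (B - A) + y • (C - A) = 0 → x = 0 ∧ y = 0)
    {x y : ℝ} (h : Y - X = x • (B - A) + y • (C - A)) (hx : x ≠ 0) : Y ≠ X :=
  fun he => hx (hind x y (by rw [← h, he, sub_self])).1

private lemma ne_of_coeff₂ {A B C X Y : EuclideanSpace ℝ (Fin 2)}
    (hind : ∀ x y : ℝ, x • (B - A) + y • (C - A) = 0 → x = 0 ∧ y = 0)
    {x y : ℝ} (h : Y - X = x • (B - A) + y • (C - A)) (hy : y ≠ 0) : Y ≠ X :=
  fun he => hy (hind x y (by rw [← h, he, sub_self])).2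

private lemma vertex_angle_bound {A B C U : EuclideanSpace ℝ (Fin 2)} {a b c : ℝ}
    (ha : 0 < a) (hb : 0 < b) (hc : 0 < c) (habc : a + b + c = 1)
    (hind : ∀ x y : ℝ, x • (B - A) + y • (C - A) = 0 → x = 0 ∧ y = 0)
    (hU : U = a • A + b • B + c • C) :
    ∠ U A B + ∠ A B C + ∠ B C A ≤ π := by
  have ha' : a = 1 - b - c := by linarith
  subst ha'
  have hbc : 0 < b + c := by linarith
  have hbcne : b + c ≠ 0 := ne_of_gt hbc
  set u : ℝ := c / (b + c) with hu
  have hu0 : 0 < u := div_pos hc hbc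
  have hu1 : u < 1 := by rw [hu, div_lt_one hbc]; linarith
  have h1u0 : 0 < 1 - u := by linarith
  have h2 : (b + c) * (1 - u) = b := by rw [hu]; field_simp; ring
  have h3 : (b + c) * u = c := by rw [hu]; field_simp
  set P : EuclideanSpace ℝ (Fin 2) := AffineMap.lineMap B C u with hP
  have hPB : P - B = u • (C - B) := by
    rw [hP, AffineMap.lineMap_apply_module']; abel
  have hPC : P - C = (1 - u) • (B - C) := by
    rw [hP, AffineMap.lineMap_apply_module]; module
  have hPA : P - A = (1 - u) • (B - A) + u • (C - A) := by
    rw [hP, AffineMap.lineMap_apply_module]; module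
  have hUA : U - A = (b + c) • (P - A) := by
    rw [hPA, hU, smul_add, smul_smul, smul_smul, h2, h3]; module
  -- ne facts
  have hCA : C ≠ A := ne_of_coeff₂ hind (x := 0) (y := 1) (by module) one_ne_zero
  have hBC : B ≠ C := ne_of_coeff₁ hind (x := 1) (y := -1) (by module) one_ne_zero
  have hPAne : P ≠ A := ne_of_coeff₁ hind hPA (ne_of_gt h1u0)
  have hPBne : P ≠ B := ne_of_coeff₂ hind (x := -u) (y := u)
    (by rw [hPB]; module) (ne_of_gt hu0)
  have hSb : Sbtw ℝ B P C := by
    rw [hP]; exact sbtw_lineMap_iff.mpr ⟨hBC, hu0, hu1⟩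
  -- chain
  have e0 : ∠ U A B = ∠ P A B := angle_left_smul hbc hUA
  have t1 : ∠ P A B + ∠ A B P + ∠ B P A = π :=
    angle_add_angle_add_angle_eq_pi B hPAne.symm
  have t2 : ∠ A B P = ∠ A B C := angle_right_smul hu0 hPB
  have t3 : ∠ A P B + ∠ A P C = π :=
    angle_add_angle_eq_pi_of_angle_eq_pi A hSb.angle₁₂₃_eq_pi
  have t4 : ∠ A P C + ∠ P C A + ∠ C A P = π :=
    angle_add_angle_add_angle_eq_pi C hPAne
  have t5 : ∠ P C A = ∠ B C A := angle_left_smul h1u0 hPC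
  have c1 : ∠ B P A = ∠ A P B := angle_comm _ _ _
  have n1 : 0 ≤ ∠ C A P := angle_nonneg _ _ _
  linarith

private lemma angle_sum_at_interior {A B C U : EuclideanSpace ℝ (Fin 2)} {a b c : ℝ}
    (ha : 0 < a) (hb : 0 < b) (hc : 0 < c) (habc : a + b + c = 1)
    (hind : ∀ x y : ℝ, x • (B - A) + y • (C - A) = 0 → x = 0 ∧ y = 0)
    (hU : U = a • A + b • B + c • C) :
    ∠ A U B + ∠ B U C + ∠ A U C = 2 * π := by
  have hc' : c = 1 - a - b := by linarith
  subst hc'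
  have hab : 0 < a + b := by linarith
  have hab1 : a + b < 1 := by linarith
  have habne : a + b ≠ 0 := ne_of_gt hab
  set t : ℝ := b / (a + b) with ht
  have ht0 : 0 < t := div_pos hb hab
  have ht1 : t < 1 := by rw [ht, div_lt_one hab]; linarith
  have h1t0 : 0 < 1 - t := by linarith
  have h2 : (a + b) * t = b := by rw [ht]; field_simp
  have h3 : (a + b) * (1 - t) = a := by rw [ht]; field_simp; ring
  set P : EuclideanSpace ℝ (Fin 2) := AffineMap.lineMap A B t with hP
  have hPA : P - A = t • (B - A) := by
    rw [hP, AffineMap.lineMap_apply_module']; abel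
  have hPB : P - B = (1 - t) • (A - B) := by
    rw [hP, AffineMap.lineMap_apply_module]; module
  have hPC : P - C = (1 - t) • (A - C) + t • (B - C) := by
    rw [hP, AffineMap.lineMap_apply_module]; module
  have hUC : U - C = (a + b) • (P - C) := by
    rw [hPC, smul_add, smul_smul, smul_smul, h2, h3, hU]; module
  -- ne facts
  have hBA : B ≠ A := ne_of_coeff₁ hind (x := 1) (y := 0) (by module) one_ne_zero
  have hAB : A ≠ B := hBA.symm
  have hUA : U ≠ A := ne_of_coeff₁ hind (x := b) (y := 1 - a - b)
    (by rw [hU]; module) (ne_of_gt hb)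
  have hUB : U ≠ B := ne_of_coeff₁ hind (x := b - 1) (y := 1 - a - b)
    (by rw [hU]; module) (by intro h; linarith)
  have hPAne : P ≠ A := ne_of_coeff₁ hind (x := t) (y := 0)
    (by rw [hPA]; module) (ne_of_gt ht0)
  have hPBne : P ≠ B := ne_of_coeff₁ hind (x := t - 1) (y := 0)
    (by rw [hPB]; module) (by intro h; linarith)
  have hCP : C ≠ P := ne_of_coeff₂ hind (x := -t) (y := 1)
    (by rw [show C - P = -(P - C) from by abel, hPC]; module) one_ne_zero
  have hS1 : Sbtw ℝ A P B := by
    rw [hP]; exact sbtw_lineMap_iff.mpr ⟨hAB, ht0, ht1⟩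
  have hUlm : U = AffineMap.lineMap C P (a + b) := by
    rw [AffineMap.lineMap_apply_module', ← hUC]; abel
  have hS2 : Sbtw ℝ C U P := by
    rw [hUlm]; exact sbtw_lineMap_iff.mpr ⟨hCP, hab, hab1⟩
  -- angle chase
  have q1 : ∠ A U C + ∠ A U P = π :=
    angle_add_angle_eq_pi_of_angle_eq_pi A hS2.angle₁₂₃_eq_pi
  have q2 : ∠ B U C + ∠ B U P = π :=
    angle_add_angle_eq_pi_of_angle_eq_pi B hS2.angle₁₂₃_eq_pi
  have q3 : ∠ U P A + ∠ U P B = π :=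
    angle_add_angle_eq_pi_of_angle_eq_pi U hS1.angle₁₂₃_eq_pi
  have tA : ∠ A U P + ∠ U P A + ∠ P A U = π :=
    angle_add_angle_add_angle_eq_pi P hUA
  have tB : ∠ B U P + ∠ U P B + ∠ P B U = π :=
    angle_add_angle_add_angle_eq_pi P hUB
  have tAB : ∠ A U B + ∠ U B A + ∠ B A U = π :=
    angle_add_angle_add_angle_eq_pi B hUA
  have s1 : ∠ P A U = ∠ B A U := angle_left_smul ht0 hPA
  have s2 : ∠ P B U = ∠ A B U := angle_left_smul h1t0 hPB
  have c1 : ∠ U B A = ∠ A B U := angle_comm _ _ _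
  linarith

private lemma indep_cyc {A B C : EuclideanSpace ℝ (Fin 2)}
    (h : ∀ x y : ℝ, x • (B - A) + y • (C - A) = 0 → x = 0 ∧ y = 0) :
    ∀ x y : ℝ, x • (C - B) + y • (A - B) = 0 → x = 0 ∧ y = 0 := by
  intro x y hxy
  have h2 : (-x - y) • (B - A) + x • (C - A) = 0 := by rw [← hxy]; module
  obtain ⟨h3, h4⟩ := h _ _ h2
  constructor <;> linarith

private lemma indep_swap {A B C : EuclideanSpace ℝ (Fin 2)}
    (h : ∀ x y : ℝ, x • (B - A) + y • (C - A) = 0 → x = 0 ∧ y = 0) :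
    ∀ x y : ℝ, x • (C - A) + y • (B - A) = 0 → x = 0 ∧ y = 0 := by
  intro x y hxy
  obtain ⟨h3, h4⟩ := h y x (by rw [← hxy]; module)
  exact ⟨h4, h3⟩

/-- If every interior angle of triangle `Qi Qj Qk` is at least `θs` (with
`0 ≤ θs ≤ 60°`) and `U` is strictly inside the triangle, then the minimum of the
three visibility angles at `U` lies in `[θs, 120°]`, and any visibility angle
closest to `90°` satisfies `|90° − θE| ≤ 90° − θs`. Angles in radians. -/
theorem visibility_angle_bounds_interior
    (Qi Qj Qk U : EuclideanSpace ℝ (Fin 2)) (θs : ℝ)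
    (hθ0 : 0 ≤ θs) (hθ1 : θs ≤ Real.pi / 3)
    (hind : AffineIndependent ℝ ![Qi, Qj, Qk])
    (hAi : θs ≤ ∠ Qj Qi Qk) (hAj : θs ≤ ∠ Qi Qj Qk) (hAk : θs ≤ ∠ Qi Qk Qj)
    (hU : U ∈ interior (convexHull ℝ ({Qi, Qj, Qk} : Set (EuclideanSpace ℝ (Fin 2))))) :
    (θs ≤ min (∠ Qi U Qj) (min (∠ Qi U Qk) (∠ Qj U Qk)) ∧
      min (∠ Qi U Qj) (min (∠ Qi U Qk) (∠ Qj U Qk)) ≤ 2 * Real.pi / 3) ∧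
    ∀ θE ∈ ({∠ Qi U Qj, ∠ Qi U Qk, ∠ Qj U Qk} : Set ℝ),
      (∀ θ ∈ ({∠ Qi U Qj, ∠ Qi U Qk, ∠ Qj U Qk} : Set ℝ),
          |Real.pi / 2 - θE| ≤ |Real.pi / 2 - θ|) →
      |Real.pi / 2 - θE| ≤ Real.pi / 2 - θs := by
  -- linear independence form
  have hind' : ∀ x y : ℝ, x • (Qj - Qi) + y • (Qk - Qi) = 0 → x = 0 ∧ y = 0 := by
    intro x y hxy
    have hw : ∑ i, ![-x - y, x, y] i = 0 := by
      simp [Fin.sum_univ_three]; ring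
    have hv : Finset.univ.weightedVSub ![Qi, Qj, Qk] ![-x - y, x, y]
        = (0 : EuclideanSpace ℝ (Fin 2)) := by
      rw [Finset.weightedVSub_eq_weightedVSubOfPoint_of_sum_eq_zero _ _ _ hw Qi,
        Finset.weightedVSubOfPoint_apply]
      simp only [Fin.sum_univ_three, Matrix.cons_val_zero, Matrix.cons_val_one,
        Matrix.head_cons, Matrix.cons_val_two, Matrix.tail_cons, vsub_eq_sub]
      rw [← hxy]; module
    have h1 := hind Finset.univ _ hw hv 1 (Finset.mem_univ 1)
    have h2 := hind Finset.univ _ hw hv 2 (Finset.mem_univ 2)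
    simp only [Matrix.cons_val_one, Matrix.head_cons, Matrix.cons_val_two,
      Matrix.tail_cons] at h1 h2
    exact ⟨h1, h2⟩
  -- affine basis and barycentric coordinates
  have htot : affineSpan ℝ (Set.range ![Qi, Qj, Qk]) = ⊤ := by
    rw [hind.affineSpan_eq_top_iff_card_eq_finrank_add_one]
    simp
  let bb : AffineBasis (Fin 3) ℝ (EuclideanSpace ℝ (Fin 2)) := ⟨![Qi, Qj, Qk], hind, htot⟩
  have hrange : Set.range (bb : Fin 3 → EuclideanSpace ℝ (Fin 2))
      = ({Qi, Qj, Qk} : Set (EuclideanSpace ℝ (Fin 2))) := by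
    show Set.range ![Qi, Qj, Qk] = _
    simp [Matrix.range_cons, Matrix.range_empty]
    ext x; simp; tauto
  rw [← hrange, bb.interior_convexHull] at hU
  set a := bb.coord 0 U with hadef
  set b := bb.coord 1 U with hbdef
  set c := bb.coord 2 U with hcdef
  have ha : 0 < a := hU 0
  have hb : 0 < b := hU 1
  have hc : 0 < c := hU 2
  have habc : a + b + c = 1 := by
    have := bb.sum_coord_apply_eq_one U
    rwa [Fin.sum_univ_three] at this
  have hUeq : U = a • Qi + b • Qj + c • Qk := by
    have h := bb.linear_combination_coord_eq_self U
    rw [Fin.sum_univ_three] at h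
    exact h.symm
  have haeq : a = 1 - b - c := by linarith
  -- permuted independence facts
  have hI_ijk := hind'                                   -- (Qi,Qj,Qk)
  have hI_jki := indep_cyc hI_ijk                        -- (Qj,Qk,Qi)
  have hI_kij := indep_cyc hI_jki                        -- (Qk,Qi,Qj)
  have hI_ikj := indep_swap hI_ijk                       -- (Qi,Qk,Qj)
  have hI_jik := indep_swap hI_jki                       -- (Qj,Qi,Qk)
  have hI_kji := indep_swap hI_kij                       -- (Qk,Qj,Qi)
  -- permuted expressions for U
  have hU1 : U = a • Qi + b • Qj + c • Qk := hUeq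
  have hU2 : U = b • Qj + c • Qk + a • Qi := by rw [hUeq]; module
  have hU3 : U = c • Qk + a • Qi + b • Qj := by rw [hUeq]; module
  have hU4 : U = a • Qi + c • Qk + b • Qj := by rw [hUeq]; module
  have hU5 : U = b • Qj + a • Qi + c • Qk := by rw [hUeq]; module
  have hU6 : U = c • Qk + b • Qj + a • Qi := by rw [hUeq]; module
  -- ne facts
  have hUQi : U ≠ Qi := ne_of_coeff₁ hI_ijk (x := b) (y := c)
    (by rw [hUeq, haeq]; module) (ne_of_gt hb)
  have hUQj : U ≠ Qj := ne_of_coeff₁ hI_ijk (x := b - 1) (y := c)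
    (by rw [hUeq, haeq]; module) (by intro h; linarith)
  have hUQk : U ≠ Qk := ne_of_coeff₂ hI_ijk (x := b) (y := c - 1)
    (by rw [hUeq, haeq]; module) (by intro h; linarith)
  have hQjQi : Qj ≠ Qi := ne_of_coeff₁ hI_ijk (x := 1) (y := 0) (by module) one_ne_zero
  have hQkQi : Qk ≠ Qi := ne_of_coeff₂ hI_ijk (x := 0) (y := 1) (by module) one_ne_zero
  have hQkQj : Qk ≠ Qj := ne_of_coeff₁ hI_ijk (x := -1) (y := 1) (by module) (by norm_num)
  -- the six vertex-angle bounds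
  have H1 := vertex_angle_bound ha hb hc (by linarith) hI_ijk hU1
  have H5 := vertex_angle_bound hb hc ha (by linarith) hI_jki hU2
  have H4 := vertex_angle_bound hc ha hb (by linarith) hI_kij hU3
  have H3 := vertex_angle_bound ha hc hb (by linarith) hI_ikj hU4
  have H2 := vertex_angle_bound hb ha hc (by linarith) hI_jik hU5
  have H6 := vertex_angle_bound hc hb ha (by linarith) hI_kji hU6
  -- triangle sums
  have T1 : ∠ Qi U Qj + ∠ U Qj Qi + ∠ Qj Qi U = π :=
    angle_add_angle_add_angle_eq_pi Qj hUQi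
  have T2 : ∠ Qi U Qk + ∠ U Qk Qi + ∠ Qk Qi U = π :=
    angle_add_angle_add_angle_eq_pi Qk hUQi
  have T3 : ∠ Qj U Qk + ∠ U Qk Qj + ∠ Qk Qj U = π :=
    angle_add_angle_add_angle_eq_pi Qk hUQj
  have Tbig : ∠ Qi Qk Qj + ∠ Qk Qj Qi + ∠ Qj Qi Qk = π :=
    angle_add_angle_add_angle_eq_pi Qj hQkQi
  -- angle commutations
  have c1 : ∠ Qj Qi U = ∠ U Qi Qj := angle_comm _ _ _
  have c2 : ∠ Qk Qi U = ∠ U Qi Qk := angle_comm _ _ _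
  have c3 : ∠ Qk Qj U = ∠ U Qj Qk := angle_comm _ _ _
  have c4 : ∠ Qj Qk Qi = ∠ Qi Qk Qj := angle_comm _ _ _
  have c5 : ∠ Qk Qj Qi = ∠ Qi Qj Qk := angle_comm _ _ _
  have c6 : ∠ Qk Qi Qj = ∠ Qj Qi Qk := angle_comm _ _ _
  -- lower bounds on the three visibility angles
  have Lij : θs ≤ ∠ Qi U Qj := by linarith
  have Lik : θs ≤ ∠ Qi U Qk := by linarith
  have Ljk : θs ≤ ∠ Qj U Qk := by linarith
  -- the sum of visibility angles
  have S : ∠ Qi U Qj + ∠ Qj U Qk + ∠ Qi U Qk = 2 * π :=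
    angle_sum_at_interior ha hb hc habc hI_ijk hU1
  set α := ∠ Qi U Qj
  set γ := ∠ Qi U Qk
  set β := ∠ Qj U Qk
  have hminle : min α (min γ β) ≤ 2 * π / 3 := by
    by_contra hcon
    push_neg at hcon
    rw [lt_min_iff, lt_min_iff] at hcon
    linarith [hcon.1, hcon.2.1, hcon.2.2]
  have hlemin : θs ≤ min α (min γ β) := le_min Lij (le_min Lik Ljk)
  refine ⟨⟨hlemin, hminle⟩, ?_⟩
  intro θE hθE hminE
  set m := min α (min γ β) with hm
  have hmem : m ∈ ({α, γ, β} : Set ℝ) := by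
    rcases min_choice α (min γ β) with h | h
    · rw [hm, h]; simp
    · rcases min_choice γ β with h2 | h2 <;> rw [hm, h, h2] <;> simp
  have key : |Real.pi / 2 - m| ≤ Real.pi / 2 - θs := by
    rw [abs_le]
    constructor <;> [linarith [hminle]; linarith [hlemin]]
  exact (hminE m hmem).trans key
end

section
/- Let triangle △Q_iQ_jQ_k have incircle of radius r₀ touching side Q_iQ_k at point L. Suppose the angle at Q_k is the smallest interior angle, the angle at Q_k is at least θ_s, and ‖Q_iQ_k‖ ≥ d_s. Then tan(θ_s/2) ≤ r₀/(d_s/2), i.e., r₀ ≥ (d_s/2)·tan(θ_s/2). -/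
open EuclideanGeometry Real InnerProductGeometry RealInnerProductSpace Metric

noncomputable section InradiusAux

abbrev Epl := EuclideanSpace ℝ (Fin 2)

def Jrot (z : Epl) : Epl := (WithLp.equiv 2 (Fin 2 → ℝ)).symm ![-z 1, z 0]

lemma inner_expand (x y : Epl) : ⟪x, y⟫ = x 0 * y 0 + x 1 * y 1 := by
  simp [PiLp.inner_apply, Fin.sum_univ_two, RCLike.inner_apply]
  ring

lemma Jrot_apply0 (z : Epl) : Jrot z 0 = -z 1 := rfl
lemma Jrot_apply1 (z : Epl) : Jrot z 1 = z 0 := rfl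

lemma parseval (m x y : Epl) :
    ⟪m, m⟫ * ⟪x, y⟫ = ⟪x, m⟫ * ⟪y, m⟫ + ⟪x, Jrot m⟫ * ⟪y, Jrot m⟫ := by
  simp only [inner_expand, Jrot_apply0, Jrot_apply1]
  ring

lemma inner_Jrot_self (m : Epl) : ⟪m, Jrot m⟫ = 0 := by
  simp only [inner_expand, Jrot_apply0, Jrot_apply1]
  ring

lemma sin_angle_decomp {u w : Epl} (hu : u ≠ 0) (hw : w ≠ 0) (hperp : ⟪u, w⟫ = 0) (t : ℝ) :
    Real.sin (InnerProductGeometry.angle u (t • u + w)) = ‖w‖ / ‖t • u + w‖ := by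
  rcases lt_trichotomy t 0 with ht | ht | ht
  · have htu : t • u ≠ 0 := smul_ne_zero (ne_of_lt ht) hu
    have hperp' : ⟪t • u, w⟫ = 0 := by rw [real_inner_smul_left, hperp, mul_zero]
    have h1 : InnerProductGeometry.angle (t • u) (t • u + w) =
        π - InnerProductGeometry.angle u (t • u + w) := by
      have : t • u = (-t) • (-u) := by module
      rw [this, InnerProductGeometry.angle_smul_left_of_pos _ _ (by linarith), angle_neg_left]
    have h2 := sin_angle_add_of_inner_eq_zero hperp' (Or.inl htu)
    rw [h1, Real.sin_pi_sub] at h2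
    exact h2
  · subst ht
    rw [zero_smul, zero_add, (inner_eq_zero_iff_angle_eq_pi_div_two u w).mp hperp,
      Real.sin_pi_div_two, div_self (norm_ne_zero_iff.mpr hw)]
  · have htu : t • u ≠ 0 := smul_ne_zero (ne_of_gt ht) hu
    have hperp' : ⟪t • u, w⟫ = 0 := by rw [real_inner_smul_left, hperp, mul_zero]
    have h2 := sin_angle_add_of_inner_eq_zero hperp' (Or.inl htu)
    rwa [angle_smul_left_of_pos _ _ ht] at h2

lemma bisector {u v m w₁ w₂ : Epl} {a b t₁ t₂ : ℝ}
    (hu : u ≠ 0) (hv : v ≠ 0)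
    (ha : 0 < a) (hb : 0 < b) (hm : m = a • u + b • v)
    (ht₁ : 0 < t₁) (h₁ : m = t₁ • u + w₁) (hw₁ : ⟪u, w₁⟫ = 0) (hw₁0 : w₁ ≠ 0)
    (h₂ : m = t₂ • v + w₂) (hw₂ : ⟪v, w₂⟫ = 0)
    (hnorm : ‖w₁‖ = ‖w₂‖)
    (hlt : InnerProductGeometry.angle u v < π) :
    InnerProductGeometry.angle u v = 2 * InnerProductGeometry.angle u m := by
  have hu' : (0:ℝ) < ‖u‖ := norm_pos_iff.mpr hu
  have hv' : (0:ℝ) < ‖v‖ := norm_pos_iff.mpr hv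
  have hw₂0 : w₂ ≠ 0 := by
    intro h; rw [h, norm_zero] at hnorm; exact hw₁0 (norm_eq_zero.mp hnorm)
  have hum : ⟪u, m⟫ = t₁ * ‖u‖ ^ 2 := by
    rw [h₁, inner_add_right, real_inner_smul_right, hw₁, real_inner_self_eq_norm_sq]; ring
  have humpos : 0 < ⟪u, m⟫ := by rw [hum]; positivity
  have hm0 : m ≠ 0 := by
    intro h; rw [h, inner_zero_right] at humpos; exact lt_irrefl _ humpos
  have hm' : (0:ℝ) < ‖m‖ := norm_pos_iff.mpr hm0
  obtain ⟨β, hβ⟩ : ∃ x, x = InnerProductGeometry.angle u m := ⟨_, rfl⟩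
  obtain ⟨β', hβ'⟩ : ∃ x, x = InnerProductGeometry.angle v m := ⟨_, rfl⟩
  have hβ0 : 0 ≤ β := hβ ▸ angle_nonneg _ _
  have hβ'0 : 0 ≤ β' := hβ' ▸ angle_nonneg _ _
  have hβpi : β ≤ π := hβ ▸ angle_le_pi _ _
  have hβ'pi : β' ≤ π := hβ' ▸ angle_le_pi _ _
  have hsinβ : Real.sin β = ‖w₁‖ / ‖m‖ := by
    rw [hβ, h₁]; exact sin_angle_decomp hu hw₁0 hw₁ t₁
  have hsinβ' : Real.sin β' = ‖w₂‖ / ‖m‖ := by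
    rw [hβ', h₂]; exact sin_angle_decomp hv hw₂0 hw₂ t₂
  have hcosβ : Real.cos β = ⟪u, m⟫ / (‖u‖ * ‖m‖) := by rw [hβ]; exact cos_angle u m
  have hcosβpos : 0 < Real.cos β := by rw [hcosβ]; positivity
  have hβlt : β < π / 2 := by
    by_contra h
    push_neg at h
    have := Real.cos_nonpos_of_pi_div_two_le_of_le h (by linarith [Real.pi_pos])
    linarith
  have hcum : ⟪u, m⟫ = Real.cos β * (‖u‖ * ‖m‖) := by
    rw [hcosβ]; field_simp
  have hcvm : ⟪v, m⟫ = Real.cos β' * (‖v‖ * ‖m‖) := by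
    rw [hβ', cos_angle]; field_simp
  have hmm : ⟪m, m⟫ = ‖m‖ ^ 2 := real_inner_self_eq_norm_sq m
  obtain ⟨cu, hcu⟩ : ∃ x, x = ⟪u, Jrot m⟫ := ⟨_, rfl⟩
  obtain ⟨cv, hcv⟩ : ∃ x, x = ⟪v, Jrot m⟫ := ⟨_, rfl⟩
  have hsum0 : a * cu + b * cv = 0 := by
    have h0 : ⟪a • u + b • v, Jrot m⟫ = 0 := by rw [← hm]; exact inner_Jrot_self m
    rw [inner_add_left, real_inner_smul_left, real_inner_smul_left, ← hcu, ← hcv] at h0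
    exact h0
  have hsinβ0 : 0 ≤ Real.sin β := Real.sin_nonneg_of_nonneg_of_le_pi hβ0 hβpi
  have hsinβ'0 : 0 ≤ Real.sin β' := Real.sin_nonneg_of_nonneg_of_le_pi hβ'0 hβ'pi
  have hcu2 : cu ^ 2 = (‖u‖ * ‖m‖ * Real.sin β) ^ 2 := by
    have hp := parseval m u u
    have hsc : Real.sin β ^ 2 = 1 - Real.cos β ^ 2 := Real.sin_sq β
    have huu : ⟪u, u⟫ = ‖u‖ ^ 2 := real_inner_self_eq_norm_sq u
    rw [hmm, huu, hcum, ← hcu] at hp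
    linear_combination -hp - (‖u‖ * ‖m‖) ^ 2 * hsc
  have hcv2 : cv ^ 2 = (‖v‖ * ‖m‖ * Real.sin β') ^ 2 := by
    have hp := parseval m v v
    have hsc : Real.sin β' ^ 2 = 1 - Real.cos β' ^ 2 := Real.sin_sq β'
    have hvv : ⟪v, v⟫ = ‖v‖ ^ 2 := real_inner_self_eq_norm_sq v
    rw [hmm, hvv, hcvm, ← hcv] at hp
    linear_combination -hp - (‖v‖ * ‖m‖) ^ 2 * hsc
  have hcucv_np : cu * cv ≤ 0 := by
    have hcveq : cv = -(a / b) * cu := by field_simp; linarith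
    rw [hcveq]
    have h1 : cu * (-(a / b) * cu) = -((a / b) * cu ^ 2) := by ring
    rw [h1]
    have h2 : 0 ≤ (a / b) * cu ^ 2 := by positivity
    linarith
  have hX0 : 0 ≤ (‖u‖ * ‖m‖ * Real.sin β) * (‖v‖ * ‖m‖ * Real.sin β') := by positivity
  have hcucv : cu * cv = -((‖u‖ * ‖m‖ * Real.sin β) * (‖v‖ * ‖m‖ * Real.sin β')) := by
    have hfact : (cu * cv - (‖u‖ * ‖m‖ * Real.sin β) * (‖v‖ * ‖m‖ * Real.sin β')) *
        (cu * cv + (‖u‖ * ‖m‖ * Real.sin β) * (‖v‖ * ‖m‖ * Real.sin β')) = 0 := by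
      linear_combination cv ^ 2 * hcu2 + (‖u‖ * ‖m‖ * Real.sin β) ^ 2 * hcv2
    rcases mul_eq_zero.mp hfact with h | h
    · have h1 : cu * cv = (‖u‖ * ‖m‖ * Real.sin β) * (‖v‖ * ‖m‖ * Real.sin β') := by linarith
      have h2 : (‖u‖ * ‖m‖ * Real.sin β) * (‖v‖ * ‖m‖ * Real.sin β') = 0 :=
        le_antisymm (by linarith) hX0
      rw [h1, h2]; linarith
    · linarith
  have hkey : Real.cos (InnerProductGeometry.angle u v) =
      Real.cos β * Real.cos β' - Real.sin β * Real.sin β' := by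
    have hp := parseval m u v
    rw [hmm, hcum, hcvm, ← hcu, ← hcv, hcucv] at hp
    have hUV : ⟪u, v⟫ = (Real.cos β * Real.cos β' - Real.sin β * Real.sin β') * (‖u‖ * ‖v‖) := by
      have h2 : ‖m‖ ^ 2 * ⟪u, v⟫ =
          ‖m‖ ^ 2 * ((Real.cos β * Real.cos β' - Real.sin β * Real.sin β') * (‖u‖ * ‖v‖)) := by
        linear_combination hp
      exact mul_left_cancel₀ (by positivity) h2
    rw [cos_angle, hUV]
    field_simp
  have hsineq : Real.sin β' = Real.sin β := by rw [hsinβ, hsinβ', hnorm]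
  have hβ'le : β' ≤ π / 2 := by
    by_contra h
    push_neg at h
    have h1 : Real.sin (π - β') = Real.sin β := by rw [Real.sin_pi_sub, hsineq]
    have h2 : π - β' = β :=
      Real.injOn_sin ⟨by linarith, by linarith⟩ ⟨by linarith, by linarith⟩ h1
    have hβ'eq : β' = π - β := by linarith
    have hcm1 : Real.cos (InnerProductGeometry.angle u v) = -1 := by
      rw [hkey, hβ'eq, Real.cos_pi_sub, Real.sin_pi_sub]
      linear_combination -Real.sin_sq_add_cos_sq β
    have hpi : InnerProductGeometry.angle u v = π := by
      apply Real.injOn_cos ⟨angle_nonneg _ _, angle_le_pi _ _⟩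
        ⟨le_of_lt Real.pi_pos, le_refl π⟩
      rw [hcm1, Real.cos_pi]
    linarith
  have hββ' : β = β' :=
    Real.injOn_sin ⟨by linarith, by linarith⟩ ⟨by linarith, by linarith⟩ hsineq.symm
  have hcos2 : Real.cos (InnerProductGeometry.angle u v) = Real.cos (2 * β) := by
    rw [hkey, ← hββ', ← Real.cos_add]; ring_nf
  rw [← hβ]
  exact Real.injOn_cos ⟨angle_nonneg _ _, angle_le_pi _ _⟩ ⟨by linarith, by linarith⟩ hcos2


lemma dist_orthProj_le (s : AffineSubspace ℝ Epl) [Nonempty s]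
    [s.direction.HasOrthogonalProjection] (p : Epl) {y : Epl} (hy : y ∈ s) :
    dist p (EuclideanGeometry.orthogonalProjection s p) ≤ dist p y := by
  have h := EuclideanGeometry.dist_sq_eq_dist_orthogonalProjection_sq_add_dist_orthogonalProjection_sq
    (s := s) (p₁ := y) p hy
  rw [dist_comm y p] at h
  nlinarith [dist_nonneg (x := p) (y := ((EuclideanGeometry.orthogonalProjection s p : Epl))),
    dist_nonneg (x := p) (y := y),
    dist_nonneg (x := y) (y := ((EuclideanGeometry.orthogonalProjection s p : Epl)))]

lemma eq_orthProj_of_dist_le {s : AffineSubspace ℝ Epl} [Nonempty s]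
    [s.direction.HasOrthogonalProjection] {p y : Epl} (hy : y ∈ s)
    (hle : dist p y ≤ dist p (EuclideanGeometry.orthogonalProjection s p)) :
    y = (EuclideanGeometry.orthogonalProjection s p : Epl) := by
  have h := EuclideanGeometry.dist_sq_eq_dist_orthogonalProjection_sq_add_dist_orthogonalProjection_sq
    (s := s) (p₁ := y) p hy
  rw [dist_comm y p] at h
  have hz : dist y ((EuclideanGeometry.orthogonalProjection s p : Epl)) = 0 := by
    nlinarith [dist_nonneg (x := p) (y := y),
      dist_nonneg (x := y) (y := ((EuclideanGeometry.orthogonalProjection s p : Epl))),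
      dist_nonneg (x := p) (y := ((EuclideanGeometry.orthogonalProjection s p : Epl)))]
  exact eq_of_dist_eq_zero hz

lemma inner_orthProj_sub (s : AffineSubspace ℝ Epl) [Nonempty s]
    [s.direction.HasOrthogonalProjection] (p : Epl) {z₁ z₂ : Epl}
    (h₁ : z₁ ∈ s) (h₂ : z₂ ∈ s) :
    ⟪p - (EuclideanGeometry.orthogonalProjection s p : Epl), z₁ - z₂⟫ = 0 := by
  have hperp := EuclideanGeometry.vsub_orthogonalProjection_mem_direction_orthogonal s p
  have hz : z₁ -ᵥ z₂ ∈ s.direction := AffineSubspace.vsub_mem_direction h₁ h₂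
  have h0 := Submodule.inner_right_of_mem_orthogonal hz hperp
  rw [vsub_eq_sub] at h0
  rw [real_inner_comm]
  exact h0

end InradiusAux

set_option maxHeartbeats 2000000 in
/-- Inradius lower bound: in a nondegenerate triangle `Qi Qj Qk` whose incircle
(center `O₀`, radius `r₀`, equidistant `r₀` from the three side lines) touches
side `Qi Qk` at `L`, if the interior angle at `Qk` is the smallest one, is at
least `θs`, and `‖Qi Qk‖ ≥ ds`, then `tan (θs/2) ≤ r₀ / (ds/2)`. -/
theorem inradius_lower_bound
    (Qi Qj Qk O₀ L : EuclideanSpace ℝ (Fin 2)) (r₀ θs ds : ℝ)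
    (hind : AffineIndependent ℝ ![Qi, Qj, Qk])
    (hr₀ : 0 < r₀) (hds : 0 < ds) (hθs0 : 0 < θs) (hθs1 : θs < Real.pi)
    (hO₀ : O₀ ∈ interior (convexHull ℝ ({Qi, Qj, Qk} : Set (EuclideanSpace ℝ (Fin 2)))))
    (hdik : Metric.infDist O₀ (affineSpan ℝ ({Qi, Qk} : Set (EuclideanSpace ℝ (Fin 2)))) = r₀)
    (hdij : Metric.infDist O₀ (affineSpan ℝ ({Qi, Qj} : Set (EuclideanSpace ℝ (Fin 2)))) = r₀)
    (hdjk : Metric.infDist O₀ (affineSpan ℝ ({Qj, Qk} : Set (EuclideanSpace ℝ (Fin 2)))) = r₀)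
    (hL : L ∈ segment ℝ Qi Qk) (hLO : dist O₀ L = r₀)
    (hsmall1 : ∠ Qi Qk Qj ≤ ∠ Qk Qi Qj) (hsmall2 : ∠ Qi Qk Qj ≤ ∠ Qi Qj Qk)
    (hangle : θs ≤ ∠ Qi Qk Qj)
    (hside : ds ≤ dist Qi Qk) :
    Real.tan (θs / 2) ≤ r₀ / (ds / 2) := by
  classical
  -- memberships in the three side lines
  have hQi_ik : Qi ∈ affineSpan ℝ ({Qi, Qk} : Set Epl) := mem_affineSpan ℝ (by simp)
  have hQk_ik : Qk ∈ affineSpan ℝ ({Qi, Qk} : Set Epl) := mem_affineSpan ℝ (by simp)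
  have hQi_ij : Qi ∈ affineSpan ℝ ({Qi, Qj} : Set Epl) := mem_affineSpan ℝ (by simp)
  have hQj_ij : Qj ∈ affineSpan ℝ ({Qi, Qj} : Set Epl) := mem_affineSpan ℝ (by simp)
  have hQj_jk : Qj ∈ affineSpan ℝ ({Qj, Qk} : Set Epl) := mem_affineSpan ℝ (by simp)
  have hQk_jk : Qk ∈ affineSpan ℝ ({Qj, Qk} : Set Epl) := mem_affineSpan ℝ (by simp)
  haveI : Nonempty (affineSpan ℝ ({Qi, Qk} : Set Epl)) := ⟨⟨Qi, hQi_ik⟩⟩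
  haveI : Nonempty (affineSpan ℝ ({Qi, Qj} : Set Epl)) := ⟨⟨Qi, hQi_ij⟩⟩
  haveI : Nonempty (affineSpan ℝ ({Qj, Qk} : Set Epl)) := ⟨⟨Qj, hQj_jk⟩⟩
  -- distinctness & noncollinearity
  have hinj := hind.injective
  have hik : Qi ≠ Qk := fun h => by
    have := hinj.ne (show (0 : Fin 3) ≠ 2 by decide); simp [h] at this
  have hij : Qi ≠ Qj := fun h => by
    have := hinj.ne (show (0 : Fin 3) ≠ 1 by decide); simp [h] at this
  have hjk : Qj ≠ Qk := fun h => by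
    have := hinj.ne (show (1 : Fin 3) ≠ 2 by decide); simp [h] at this
  have hncol : ¬ Collinear ℝ ({Qi, Qj, Qk} : Set Epl) :=
    affineIndependent_iff_not_collinear_set.mp hind
  have hαpi : ∠ Qi Qk Qj < Real.pi := by
    rcases lt_or_eq_of_le (EuclideanGeometry.angle_le_pi Qi Qk Qj) with h | h
    · exact h
    · exfalso
      have hc := (EuclideanGeometry.angle_eq_pi_iff_sbtw.mp h).wbtw.collinear
      exact hncol (Collinear.subset (by intro x hx; simp at hx ⊢; tauto) hc)
  have hγpi : ∠ Qk Qi Qj < Real.pi := by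
    rcases lt_or_eq_of_le (EuclideanGeometry.angle_le_pi Qk Qi Qj) with h | h
    · exact h
    · exfalso
      have hc := (EuclideanGeometry.angle_eq_pi_iff_sbtw.mp h).wbtw.collinear
      exact hncol (Collinear.subset (by intro x hx; simp at hx ⊢; tauto) hc)
  -- convex weights
  obtain ⟨aw, bw, cw, haw, hbw, hcw, hsumw, hOw⟩ :
      ∃ aw bw cw : ℝ, 0 < aw ∧ 0 < bw ∧ 0 < cw ∧ aw + bw + cw = 1 ∧
        O₀ = aw • Qi + bw • Qj + cw • Qk := by
    have hOhull : O₀ ∈ convexHull ℝ ({Qi, Qj, Qk} : Set Epl) := interior_subset hO₀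
    rw [show ({Qi, Qj, Qk} : Set Epl) = insert Qi {Qj, Qk} from rfl,
      convexHull_insert ⟨Qj, by simp⟩, mem_convexJoin] at hOhull
    obtain ⟨x, hx, z, hz, hOseg⟩ := hOhull
    rw [Set.mem_singleton_iff] at hx
    rw [hx] at hOseg
    rw [convexHull_pair] at hz
    obtain ⟨r', s', hr0, hs0, hrs, hzeq⟩ := hz
    obtain ⟨p, q, hp0, hq0, hpq, hO⟩ := hOseg
    have hOcomb : O₀ = p • Qi + (q * r') • Qj + (q * s') • Qk := by
      rw [← hO, ← hzeq]; module
    have habc : p + q * r' + q * s' = 1 := by nlinarith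
    -- positivity of each weight
    have hbne : q * r' ≠ 0 := by
      intro h
      have hmem : O₀ ∈ affineSpan ℝ ({Qi, Qk} : Set Epl) := by
        have hm := AffineSubspace.smul_vsub_vadd_mem (affineSpan ℝ ({Qi, Qk} : Set Epl))
          (q * s') hQk_ik hQi_ik hQi_ik
        have heq : O₀ = (q * s') • (Qk -ᵥ Qi) +ᵥ Qi := by
          rw [vsub_eq_sub, vadd_eq_add, hOcomb, h]
          have hp' : p = 1 - q * s' := by linarith
          rw [hp']; module
        rwa [← heq] at hm
      have := Metric.infDist_zero_of_mem hmem
      rw [hdik] at this; linarith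
    have hane : p ≠ 0 := by
      intro h
      have hmem : O₀ ∈ affineSpan ℝ ({Qj, Qk} : Set Epl) := by
        have hm := AffineSubspace.smul_vsub_vadd_mem (affineSpan ℝ ({Qj, Qk} : Set Epl))
          (q * s') hQk_jk hQj_jk hQj_jk
        have heq : O₀ = (q * s') • (Qk -ᵥ Qj) +ᵥ Qj := by
          rw [vsub_eq_sub, vadd_eq_add, hOcomb, h]
          have hp' : q * r' = 1 - q * s' := by linarith
          rw [hp']; module
        rwa [← heq] at hm
      have := Metric.infDist_zero_of_mem hmem
      rw [hdjk] at this; linarith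
    have hcne : q * s' ≠ 0 := by
      intro h
      have hmem : O₀ ∈ affineSpan ℝ ({Qi, Qj} : Set Epl) := by
        have hm := AffineSubspace.smul_vsub_vadd_mem (affineSpan ℝ ({Qi, Qj} : Set Epl))
          (q * r') hQj_ij hQi_ij hQi_ij
        have heq : O₀ = (q * r') • (Qj -ᵥ Qi) +ᵥ Qi := by
          rw [vsub_eq_sub, vadd_eq_add, hOcomb, h]
          have hp' : p = 1 - q * r' := by linarith
          rw [hp']; module
        rwa [← heq] at hm
      have := Metric.infDist_zero_of_mem hmem
      rw [hdij] at this; linarith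
    exact ⟨p, q * r', q * s',
      lt_of_le_of_ne hp0 (Ne.symm hane),
      lt_of_le_of_ne (mul_nonneg hq0 hr0) (Ne.symm hbne),
      lt_of_le_of_ne (mul_nonneg hq0 hs0) (Ne.symm hcne), habc, hOcomb⟩
  -- L is the orthogonal projection of O₀ on line QiQk
  obtain ⟨sL, tL, hsL0, htL0, hstL, hLdef⟩ := hL
  have hLeq : L = sL • (Qi - Qk) + Qk := by
    rw [← hLdef]
    have h' : tL = 1 - sL := by linarith
    rw [h']; module
  have hLeq' : L = tL • (Qk - Qi) + Qi := by
    rw [← hLdef]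
    have h' : sL = 1 - tL := by linarith
    rw [h']; module
  have hLik : L ∈ affineSpan ℝ ({Qi, Qk} : Set Epl) := by
    have hm := AffineSubspace.smul_vsub_vadd_mem (affineSpan ℝ ({Qi, Qk} : Set Epl))
      sL hQi_ik hQk_ik hQk_ik
    have heq : L = sL • (Qi -ᵥ Qk) +ᵥ Qk := by rw [vsub_eq_sub, vadd_eq_add, hLeq]
    rwa [← heq] at hm
  have hprojik : L = (EuclideanGeometry.orthogonalProjection
      (affineSpan ℝ ({Qi, Qk} : Set Epl)) O₀ : Epl) := by
    apply eq_orthProj_of_dist_le hLik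
    rw [hLO, ← hdik]
    exact Metric.infDist_le_dist_of_mem (EuclideanGeometry.orthogonalProjection_mem O₀)
  have hperpik : ∀ z₁ z₂ : Epl, z₁ ∈ affineSpan ℝ ({Qi, Qk} : Set Epl) →
      z₂ ∈ affineSpan ℝ ({Qi, Qk} : Set Epl) → ⟪O₀ - L, z₁ - z₂⟫ = 0 := by
    intro z₁ z₂ h₁ h₂
    rw [hprojik]
    exact inner_orthProj_sub _ _ h₁ h₂
  -- feet of perpendiculars on other two lines
  have hFle : ∀ y ∈ affineSpan ℝ ({Qj, Qk} : Set Epl),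
      dist O₀ ((EuclideanGeometry.orthogonalProjection
        (affineSpan ℝ ({Qj, Qk} : Set Epl)) O₀ : Epl)) ≤ dist O₀ y :=
    fun y hy => dist_orthProj_le _ _ hy
  have hOF : dist O₀ ((EuclideanGeometry.orthogonalProjection
      (affineSpan ℝ ({Qj, Qk} : Set Epl)) O₀ : Epl)) = r₀ := by
    apply le_antisymm
    · by_contra hcon
      push_neg at hcon
      have h1 : Metric.infDist O₀ (affineSpan ℝ ({Qj, Qk} : Set Epl) : Set Epl) <
          dist O₀ ((EuclideanGeometry.orthogonalProjection
            (affineSpan ℝ ({Qj, Qk} : Set Epl)) O₀ : Epl)) := by rw [hdjk]; exact hcon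
      obtain ⟨y, hy, hlt'⟩ := (Metric.infDist_lt_iff ⟨Qj, hQj_jk⟩).mp h1
      exact absurd hlt' (not_lt.mpr (hFle y hy))
    · rw [← hdjk]
      exact Metric.infDist_le_dist_of_mem (EuclideanGeometry.orthogonalProjection_mem O₀)
  have hGle : ∀ y ∈ affineSpan ℝ ({Qi, Qj} : Set Epl),
      dist O₀ ((EuclideanGeometry.orthogonalProjection
        (affineSpan ℝ ({Qi, Qj} : Set Epl)) O₀ : Epl)) ≤ dist O₀ y :=
    fun y hy => dist_orthProj_le _ _ hy
  have hOG : dist O₀ ((EuclideanGeometry.orthogonalProjection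
      (affineSpan ℝ ({Qi, Qj} : Set Epl)) O₀ : Epl)) = r₀ := by
    apply le_antisymm
    · by_contra hcon
      push_neg at hcon
      have h1 : Metric.infDist O₀ (affineSpan ℝ ({Qi, Qj} : Set Epl) : Set Epl) <
          dist O₀ ((EuclideanGeometry.orthogonalProjection
            (affineSpan ℝ ({Qi, Qj} : Set Epl)) O₀ : Epl)) := by rw [hdij]; exact hcon
      obtain ⟨y, hy, hlt'⟩ := (Metric.infDist_lt_iff ⟨Qi, hQi_ij⟩).mp h1
      exact absurd hlt' (not_lt.mpr (hGle y hy))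
    · rw [← hdij]
      exact Metric.infDist_le_dist_of_mem (EuclideanGeometry.orthogonalProjection_mem O₀)
  -- L ≠ Qk and L ≠ Qi
  have hLQk : L ≠ Qk := by
    intro h
    have hdOQk : dist O₀ Qk = r₀ := by rw [← h]; exact hLO
    have hprojjk : Qk = (EuclideanGeometry.orthogonalProjection
        (affineSpan ℝ ({Qj, Qk} : Set Epl)) O₀ : Epl) := by
      apply eq_orthProj_of_dist_le hQk_jk
      rw [hdOQk, ← hdjk]
      exact Metric.infDist_le_dist_of_mem (EuclideanGeometry.orthogonalProjection_mem O₀)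
    have h1 : ⟪O₀ - Qk, Qi - Qk⟫ = 0 := by
      rw [← h]; exact hperpik Qi L hQi_ik hLik
    have h2 : ⟪O₀ - Qk, Qj - Qk⟫ = 0 := by
      rw [hprojjk]
      exact inner_orthProj_sub _ _ hQj_jk (EuclideanGeometry.orthogonalProjection_mem O₀)
    have h3 : O₀ - Qk = aw • (Qi - Qk) + bw • (Qj - Qk) := by
      rw [hOw]
      have h' : cw = 1 - aw - bw := by linarith
      rw [h']; module
    have h4 : ⟪O₀ - Qk, O₀ - Qk⟫ = 0 := by
      calc ⟪O₀ - Qk, O₀ - Qk⟫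
          = ⟪O₀ - Qk, aw • (Qi - Qk) + bw • (Qj - Qk)⟫ := by rw [← h3]
        _ = aw * ⟪O₀ - Qk, Qi - Qk⟫ + bw * ⟪O₀ - Qk, Qj - Qk⟫ := by
            rw [inner_add_right, real_inner_smul_right, real_inner_smul_right]
        _ = 0 := by rw [h1, h2]; ring
    have h5 : O₀ - Qk = 0 := inner_self_eq_zero.mp h4
    have h6 : O₀ = Qk := by rwa [sub_eq_zero] at h5
    rw [h6, dist_self] at hdOQk; linarith
  have hLQi : L ≠ Qi := by
    intro h
    have hdOQi : dist O₀ Qi = r₀ := by rw [← h]; exact hLO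
    have hprojij : Qi = (EuclideanGeometry.orthogonalProjection
        (affineSpan ℝ ({Qi, Qj} : Set Epl)) O₀ : Epl) := by
      apply eq_orthProj_of_dist_le hQi_ij
      rw [hdOQi, ← hdij]
      exact Metric.infDist_le_dist_of_mem (EuclideanGeometry.orthogonalProjection_mem O₀)
    have h1 : ⟪O₀ - Qi, Qk - Qi⟫ = 0 := by
      rw [← h]; exact hperpik Qk L hQk_ik hLik
    have h2 : ⟪O₀ - Qi, Qj - Qi⟫ = 0 := by
      rw [hprojij]
      exact inner_orthProj_sub _ _ hQj_ij (EuclideanGeometry.orthogonalProjection_mem O₀)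
    have h3 : O₀ - Qi = cw • (Qk - Qi) + bw • (Qj - Qi) := by
      rw [hOw]
      have h' : aw = 1 - bw - cw := by linarith
      rw [h']; module
    have h4 : ⟪O₀ - Qi, O₀ - Qi⟫ = 0 := by
      calc ⟪O₀ - Qi, O₀ - Qi⟫
          = ⟪O₀ - Qi, cw • (Qk - Qi) + bw • (Qj - Qi)⟫ := by rw [← h3]
        _ = cw * ⟪O₀ - Qi, Qk - Qi⟫ + bw * ⟪O₀ - Qi, Qj - Qi⟫ := by
            rw [inner_add_right, real_inner_smul_right, real_inner_smul_right]
        _ = 0 := by rw [h1, h2]; ring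
    have h5 : O₀ - Qi = 0 := inner_self_eq_zero.mp h4
    have h6 : O₀ = Qi := by rwa [sub_eq_zero] at h5
    rw [h6, dist_self] at hdOQi; linarith
  have hsLpos : 0 < sL := by
    rcases lt_or_eq_of_le hsL0 with h | h
    · exact h
    · exfalso; apply hLQk; rw [hLeq, ← h]; simp
  have htLpos : 0 < tL := by
    rcases lt_or_eq_of_le htL0 with h | h
    · exact h
    · exfalso; apply hLQi; rw [hLeq', ← h]; simp
  -- common data
  have hwL : ‖O₀ - L‖ = r₀ := by rw [← dist_eq_norm]; exact hLO
  have hwL0 : O₀ - L ≠ 0 := by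
    intro h; rw [h, norm_zero] at hwL; linarith
  -- bisector at Qk
  have hαeq : ∠ Qi Qk Qj = 2 * InnerProductGeometry.angle (Qi - Qk) (O₀ - Qk) := by
    have hu : Qi - Qk ≠ 0 := sub_ne_zero.mpr hik
    have hv : Qj - Qk ≠ 0 := sub_ne_zero.mpr hjk
    have hm : O₀ - Qk = aw • (Qi - Qk) + bw • (Qj - Qk) := by
      rw [hOw]
      have h' : cw = 1 - aw - bw := by linarith
      rw [h']; module
    have h₁ : O₀ - Qk = sL • (Qi - Qk) + (O₀ - L) := by rw [hLeq]; module
    have hw₁ : ⟪Qi - Qk, O₀ - L⟫ = 0 := by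
      rw [real_inner_comm]; exact hperpik Qi Qk hQi_ik hQk_ik
    -- foot on line QjQk
    have hdmem : (EuclideanGeometry.orthogonalProjection
        (affineSpan ℝ ({Qj, Qk} : Set Epl)) O₀ : Epl) -ᵥ Qk ∈
        (affineSpan ℝ ({Qj, Qk} : Set Epl)).direction :=
      AffineSubspace.vsub_mem_direction (EuclideanGeometry.orthogonalProjection_mem O₀) hQk_jk
    have hdmem2 : (EuclideanGeometry.orthogonalProjection
        (affineSpan ℝ ({Qj, Qk} : Set Epl)) O₀ : Epl) -ᵥ Qk ∈
        Submodule.span ℝ ({Qj -ᵥ Qk} : Set Epl) := by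
      rw [← vectorSpan_pair, ← direction_affineSpan]; exact hdmem
    obtain ⟨tF, htF⟩ := Submodule.mem_span_singleton.mp hdmem2
    rw [vsub_eq_sub, vsub_eq_sub] at htF
    have h₂ : O₀ - Qk = tF • (Qj - Qk) +
        (O₀ - (EuclideanGeometry.orthogonalProjection
          (affineSpan ℝ ({Qj, Qk} : Set Epl)) O₀ : Epl)) := by
      rw [htF]; abel
    have hw₂ : ⟪Qj - Qk, O₀ - (EuclideanGeometry.orthogonalProjection
        (affineSpan ℝ ({Qj, Qk} : Set Epl)) O₀ : Epl)⟫ = 0 := by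
      rw [real_inner_comm]; exact inner_orthProj_sub _ _ hQj_jk hQk_jk
    have hnorm : ‖O₀ - L‖ = ‖O₀ - (EuclideanGeometry.orthogonalProjection
        (affineSpan ℝ ({Qj, Qk} : Set Epl)) O₀ : Epl)‖ := by
      rw [hwL, ← dist_eq_norm, hOF]
    have hlt : InnerProductGeometry.angle (Qi - Qk) (Qj - Qk) < Real.pi := hαpi
    exact bisector hu hv haw hbw hm hsLpos h₁ hw₁ hwL0 h₂ hw₂ hnorm hlt
  -- bisector at Qi
  have hγeq : ∠ Qk Qi Qj = 2 * InnerProductGeometry.angle (Qk - Qi) (O₀ - Qi) := by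
    have hu : Qk - Qi ≠ 0 := sub_ne_zero.mpr (Ne.symm hik)
    have hv : Qj - Qi ≠ 0 := sub_ne_zero.mpr (Ne.symm hij)
    have hm : O₀ - Qi = cw • (Qk - Qi) + bw • (Qj - Qi) := by
      rw [hOw]
      have h' : aw = 1 - bw - cw := by linarith
      rw [h']; module
    have h₁ : O₀ - Qi = tL • (Qk - Qi) + (O₀ - L) := by rw [hLeq']; module
    have hw₁ : ⟪Qk - Qi, O₀ - L⟫ = 0 := by
      rw [real_inner_comm]; exact hperpik Qk Qi hQk_ik hQi_ik
    have hdmem : (EuclideanGeometry.orthogonalProjection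
        (affineSpan ℝ ({Qi, Qj} : Set Epl)) O₀ : Epl) -ᵥ Qi ∈
        (affineSpan ℝ ({Qi, Qj} : Set Epl)).direction :=
      AffineSubspace.vsub_mem_direction (EuclideanGeometry.orthogonalProjection_mem O₀) hQi_ij
    have hdmem2 : (EuclideanGeometry.orthogonalProjection
        (affineSpan ℝ ({Qi, Qj} : Set Epl)) O₀ : Epl) -ᵥ Qi ∈
        Submodule.span ℝ ({Qi -ᵥ Qj} : Set Epl) := by
      rw [← vectorSpan_pair, ← direction_affineSpan]; exact hdmem
    obtain ⟨tG, htG⟩ := Submodule.mem_span_singleton.mp hdmem2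
    rw [vsub_eq_sub, vsub_eq_sub] at htG
    have h₂ : O₀ - Qi = (-tG) • (Qj - Qi) +
        (O₀ - (EuclideanGeometry.orthogonalProjection
          (affineSpan ℝ ({Qi, Qj} : Set Epl)) O₀ : Epl)) := by
      have htG' : (-tG) • (Qj - Qi) = (EuclideanGeometry.orthogonalProjection
          (affineSpan ℝ ({Qi, Qj} : Set Epl)) O₀ : Epl) - Qi := by
        rw [← htG]; module
      rw [htG']; abel
    have hw₂ : ⟪Qj - Qi, O₀ - (EuclideanGeometry.orthogonalProjection
        (affineSpan ℝ ({Qi, Qj} : Set Epl)) O₀ : Epl)⟫ = 0 := by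
      rw [real_inner_comm]
      exact inner_orthProj_sub _ _ hQj_ij hQi_ij
    have hnorm : ‖O₀ - L‖ = ‖O₀ - (EuclideanGeometry.orthogonalProjection
        (affineSpan ℝ ({Qi, Qj} : Set Epl)) O₀ : Epl)‖ := by
      rw [hwL, ← dist_eq_norm, hOG]
    have hlt : InnerProductGeometry.angle (Qk - Qi) (Qj - Qi) < Real.pi := hγpi
    exact bisector hu hv hcw hbw hm htLpos h₁ hw₁ hwL0 h₂ hw₂ hnorm hlt
  -- right angles at L and tangents
  have hraQk : ∠ O₀ L Qk = Real.pi / 2 :=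
    (InnerProductGeometry.inner_eq_zero_iff_angle_eq_pi_div_two _ _).mp
      (hperpik Qk L hQk_ik hLik)
  have hraQi : ∠ O₀ L Qi = Real.pi / 2 :=
    (InnerProductGeometry.inner_eq_zero_iff_angle_eq_pi_div_two _ _).mp
      (hperpik Qi L hQi_ik hLik)
  have htanQk : Real.tan (∠ L Qk O₀) = r₀ / dist Qk L := by
    rw [EuclideanGeometry.tan_angle_of_angle_eq_pi_div_two hraQk, hLO]
  have htanQi : Real.tan (∠ L Qi O₀) = r₀ / dist Qi L := by
    rw [EuclideanGeometry.tan_angle_of_angle_eq_pi_div_two hraQi, hLO]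
  have hangQk : ∠ L Qk O₀ = InnerProductGeometry.angle (Qi - Qk) (O₀ - Qk) := by
    show InnerProductGeometry.angle (L - Qk) (O₀ - Qk) =
      InnerProductGeometry.angle (Qi - Qk) (O₀ - Qk)
    rw [show L - Qk = sL • (Qi - Qk) by rw [hLeq]; module]
    exact InnerProductGeometry.angle_smul_left_of_pos _ _ hsLpos
  have hangQi : ∠ L Qi O₀ = InnerProductGeometry.angle (Qk - Qi) (O₀ - Qi) := by
    show InnerProductGeometry.angle (L - Qi) (O₀ - Qi) =
      InnerProductGeometry.angle (Qk - Qi) (O₀ - Qi)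
    rw [show L - Qi = tL • (Qk - Qi) by rw [hLeq']; module]
    exact InnerProductGeometry.angle_smul_left_of_pos _ _ htLpos
  -- numeric endgame
  have hβk0 : 0 ≤ InnerProductGeometry.angle (Qi - Qk) (O₀ - Qk) :=
    InnerProductGeometry.angle_nonneg _ _
  have hβi0 : 0 ≤ InnerProductGeometry.angle (Qk - Qi) (O₀ - Qi) :=
    InnerProductGeometry.angle_nonneg _ _
  have hβklt : InnerProductGeometry.angle (Qi - Qk) (O₀ - Qk) < Real.pi / 2 := by
    have := hαpi; rw [hαeq] at this; linarith
  have hβilt : InnerProductGeometry.angle (Qk - Qi) (O₀ - Qi) < Real.pi / 2 := by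
    have := hγpi; rw [hγeq] at this; linarith
  have hβle : InnerProductGeometry.angle (Qi - Qk) (O₀ - Qk) ≤
      InnerProductGeometry.angle (Qk - Qi) (O₀ - Qi) := by
    have := hsmall1; rw [hαeq, hγeq] at this; linarith
  have hpi2 : 0 < Real.pi / 2 := by positivity
  have htanle : Real.tan (InnerProductGeometry.angle (Qi - Qk) (O₀ - Qk)) ≤
      Real.tan (InnerProductGeometry.angle (Qk - Qi) (O₀ - Qi)) := by
    apply Real.strictMonoOn_tan.monotoneOn ⟨by linarith, hβklt⟩ ⟨by linarith, hβilt⟩ hβle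
  rw [hangQk] at htanQk
  rw [hangQi] at htanQi
  have hdQkL : 0 < dist Qk L := dist_pos.mpr (Ne.symm hLQk)
  have hdQiL : 0 < dist Qi L := dist_pos.mpr (Ne.symm hLQi)
  have hdiv : r₀ / dist Qk L ≤ r₀ / dist Qi L := by
    rw [← htanQk, ← htanQi]; exact htanle
  have hdistle : dist Qi L ≤ dist Qk L := (div_le_div_iff_of_pos_left hr₀ hdQkL hdQiL).mp hdiv
  have hsplit : dist Qi L + dist L Qk = dist Qi Qk := dist_add_dist_of_mem_segment ⟨sL, tL, hsL0, htL0, hstL, hLdef⟩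
  have hcommL : dist L Qk = dist Qk L := dist_comm _ _
  have hhalf : ds / 2 ≤ dist Qk L := by linarith
  have hθβ : θs / 2 ≤ InnerProductGeometry.angle (Qi - Qk) (O₀ - Qk) := by
    have := hangle; rw [hαeq] at this; linarith
  have htan1 : Real.tan (θs / 2) ≤
      Real.tan (InnerProductGeometry.angle (Qi - Qk) (O₀ - Qk)) := by
    apply Real.strictMonoOn_tan.monotoneOn ⟨by linarith, by linarith⟩
      ⟨by linarith, hβklt⟩ hθβ
  have htan2 : r₀ / dist Qk L ≤ r₀ / (ds / 2) :=
    (div_le_div_iff_of_pos_left hr₀ hdQkL (by linarith)).mpr hhalf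
  calc Real.tan (θs / 2) ≤ Real.tan (InnerProductGeometry.angle (Qi - Qk) (O₀ - Qk)) := htan1
    _ = r₀ / dist Qk L := htanQk
    _ ≤ r₀ / (ds / 2) := htan2
end
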